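/- Let p ≥ 1, let E₁,…,Eₙ and F be Banach spaces over 𝕂, and let A ∈ L(E₁,…,Eₙ,𝕂;F) be a continuous (n+1)-linear map whose last variable ranges over 𝕂. Then A is strongly multiple p-summing if and only if A1 ∈ L(E₁,…,Eₙ;F), defined by A1(x₁,…,xₙ) = A(x₁,…,xₙ,1), is strongly multiple p-summing, and in that case ‖A‖_{sm,p} = ‖A1‖_{sm,p}. (The ideal L_{sm,p} has property [B].) -/
import Mathlib


/-- `T ∈ L(E₁,…,Eₙ;F)` is strongly multiple `p`-summing with constant `C`. -/
def StronglyMultipleSumming {𝕜 : Type*} [RCLike 𝕜] {n : ℕ} {E : Fin n → Type*}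
    [∀ i, NormedAddCommGroup (E i)] [∀ i, NormedSpace 𝕜 (E i)]
    {F : Type*} [NormedAddCommGroup F] [NormedSpace 𝕜 F]
    (p : ℝ) (C : ℝ) (T : ContinuousMultilinearMap 𝕜 E F) : Prop :=
  ∀ (m : ℕ) (x : Π l, Fin m → E l),
    (∑ j : Fin n → Fin m, ‖T (fun l => x l (j l))‖ ^ p) ^ (1/p)
      ≤ C * (⨆ φ : {φ : ContinuousMultilinearMap 𝕜 E 𝕜 // ‖φ‖ ≤ 1},
          ∑ j : Fin n → Fin m, ‖φ.1 (fun l => x l (j l))‖ ^ p) ^ (1/p)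

/-- A continuous `(n+1)`-linear map `A : E₁ × ⋯ × Eₙ × 𝕜 → F` (encoded in curried form,
with values in `𝕜 →L[𝕜] F`) is strongly multiple `p`-summing with constant `C`; the
`(n+1)`-st space is `𝕜` with the absolute value, and the sup runs over the unit ball of
the continuous `(n+1)`-linear forms on `E₁ × ⋯ × Eₙ × 𝕜` (in curried form, with the
canonical (isometric) norm). -/
def StronglyMultipleSumming' {𝕜 : Type*} [RCLike 𝕜] {n : ℕ} {E : Fin n → Type*}
    [∀ i, NormedAddCommGroup (E i)] [∀ i, NormedSpace 𝕜 (E i)]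
    {F : Type*} [NormedAddCommGroup F] [NormedSpace 𝕜 F]
    (p : ℝ) (C : ℝ) (A : ContinuousMultilinearMap 𝕜 E (𝕜 →L[𝕜] F)) : Prop :=
  ∀ (m : ℕ) (x : Π l, Fin m → E l) (y : Fin m → 𝕜),
    (∑ j : Fin n → Fin m, ∑ k : Fin m, ‖A (fun l => x l (j l)) (y k)‖ ^ p) ^ (1/p)
      ≤ C * (⨆ ψ : {ψ : ContinuousMultilinearMap 𝕜 E (𝕜 →L[𝕜] 𝕜) // ‖ψ‖ ≤ 1},
          ∑ j : Fin n → Fin m, ∑ k : Fin m, ‖ψ.1 (fun l => x l (j l)) (y k)‖ ^ p) ^ (1/p)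

/-- The map `A1 : E₁ × ⋯ × Eₙ → F`, `A1(x₁,…,xₙ) = A(x₁,…,xₙ,1)`. -/
noncomputable def Aone {𝕜 : Type*} [RCLike 𝕜] {n : ℕ} {E : Fin n → Type*}
    [∀ i, NormedAddCommGroup (E i)] [∀ i, NormedSpace 𝕜 (E i)]
    {F : Type*} [NormedAddCommGroup F] [NormedSpace 𝕜 F]
    (A : ContinuousMultilinearMap 𝕜 E (𝕜 →L[𝕜] F)) : ContinuousMultilinearMap 𝕜 E F :=
  (ContinuousLinearMap.apply 𝕜 F (1 : 𝕜)).compContinuousMultilinearMap A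

section Aux

variable {𝕜 : Type*} [RCLike 𝕜] {n : ℕ} {E : Fin n → Type*}
    [∀ i, NormedAddCommGroup (E i)] [∀ i, NormedSpace 𝕜 (E i)]
    {F : Type*} [NormedAddCommGroup F] [NormedSpace 𝕜 F]

lemma aux_norm_apply (B : ContinuousMultilinearMap 𝕜 E (𝕜 →L[𝕜] F)) (v : Π l, E l) (y : 𝕜) :
    ‖B v y‖ = ‖y‖ * ‖B v (1 : 𝕜)‖ := by
  have h : B v y = y • B v (1 : 𝕜) := by
    rw [← (B v).map_smul, smul_eq_mul, mul_one]
  rw [h, norm_smul]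

lemma aux_sum_eq (p : ℝ) (B : ContinuousMultilinearMap 𝕜 E (𝕜 →L[𝕜] F)) (m : ℕ)
    (x : Π l, Fin m → E l) (y : Fin m → 𝕜) :
    ∑ j : Fin n → Fin m, ∑ k : Fin m, ‖B (fun l => x l (j l)) (y k)‖ ^ p
      = (∑ k : Fin m, ‖y k‖ ^ p) * ∑ j : Fin n → Fin m, ‖B (fun l => x l (j l)) (1 : 𝕜)‖ ^ p := by
  calc ∑ j : Fin n → Fin m, ∑ k : Fin m, ‖B (fun l => x l (j l)) (y k)‖ ^ p
      = ∑ j : Fin n → Fin m, ∑ k : Fin m,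
          ‖y k‖ ^ p * ‖B (fun l => x l (j l)) (1 : 𝕜)‖ ^ p := by
        refine Finset.sum_congr rfl fun j _ => Finset.sum_congr rfl fun k _ => ?_
        rw [aux_norm_apply, Real.mul_rpow (norm_nonneg _) (norm_nonneg _)]
    _ = _ := by
        simp only [← Finset.sum_mul, ← Finset.mul_sum]

instance aux_ne_phi (G : Type*) [NormedAddCommGroup G] [NormedSpace 𝕜 G] :
    Nonempty {φ : ContinuousMultilinearMap 𝕜 E G // ‖φ‖ ≤ 1} :=
  ⟨⟨0, by simp⟩⟩

lemma aux_bdd_phi (p : ℝ) (hp : 0 ≤ p) (m : ℕ) (x : Π l, Fin m → E l) :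
    BddAbove (Set.range fun φ : {φ : ContinuousMultilinearMap 𝕜 E 𝕜 // ‖φ‖ ≤ 1} =>
      ∑ j : Fin n → Fin m, ‖φ.1 (fun l => x l (j l))‖ ^ p) := by
  refine ⟨∑ j : Fin n → Fin m, (∏ l, ‖x l (j l)‖) ^ p, ?_⟩
  rintro _ ⟨φ, rfl⟩
  refine Finset.sum_le_sum fun j _ => Real.rpow_le_rpow (norm_nonneg _) ?_ hp
  calc ‖φ.1 (fun l => x l (j l))‖ ≤ ‖φ.1‖ * ∏ l, ‖x l (j l)‖ := φ.1.le_opNorm _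
    _ ≤ 1 * ∏ l, ‖x l (j l)‖ := by
        exact mul_le_mul_of_nonneg_right φ.2 (Finset.prod_nonneg fun _ _ => norm_nonneg _)
    _ = _ := one_mul _

lemma aux_bdd_psi (p : ℝ) (hp : 0 ≤ p) (m : ℕ) (x : Π l, Fin m → E l) (y : Fin m → 𝕜) :
    BddAbove (Set.range fun ψ : {ψ : ContinuousMultilinearMap 𝕜 E (𝕜 →L[𝕜] 𝕜) // ‖ψ‖ ≤ 1} =>
      ∑ j : Fin n → Fin m, ∑ k : Fin m, ‖ψ.1 (fun l => x l (j l)) (y k)‖ ^ p) := by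
  refine ⟨∑ j : Fin n → Fin m, ∑ k : Fin m, ((∏ l, ‖x l (j l)‖) * ‖y k‖) ^ p, ?_⟩
  rintro _ ⟨ψ, rfl⟩
  refine Finset.sum_le_sum fun j _ => Finset.sum_le_sum fun k _ =>
    Real.rpow_le_rpow (norm_nonneg _) ?_ hp
  calc ‖ψ.1 (fun l => x l (j l)) (y k)‖ ≤ ‖ψ.1 (fun l => x l (j l))‖ * ‖y k‖ :=
        (ψ.1 _).le_opNorm _
    _ ≤ (‖ψ.1‖ * ∏ l, ‖x l (j l)‖) * ‖y k‖ :=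
        mul_le_mul_of_nonneg_right (ψ.1.le_opNorm _) (norm_nonneg _)
    _ ≤ (1 * ∏ l, ‖x l (j l)‖) * ‖y k‖ := by
        gcongr
        exact ψ.2
    _ = _ := by rw [one_mul]

lemma aux_sup_psi_le (p : ℝ) (hp : 0 ≤ p) (m : ℕ) (x : Π l, Fin m → E l) (y : Fin m → 𝕜) :
    (⨆ ψ : {ψ : ContinuousMultilinearMap 𝕜 E (𝕜 →L[𝕜] 𝕜) // ‖ψ‖ ≤ 1},
        ∑ j : Fin n → Fin m, ∑ k : Fin m, ‖ψ.1 (fun l => x l (j l)) (y k)‖ ^ p)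
      ≤ (∑ k : Fin m, ‖y k‖ ^ p) *
        ⨆ φ : {φ : ContinuousMultilinearMap 𝕜 E 𝕜 // ‖φ‖ ≤ 1},
          ∑ j : Fin n → Fin m, ‖φ.1 (fun l => x l (j l))‖ ^ p := by
  refine ciSup_le fun ψ => ?_
  rw [aux_sum_eq]
  refine mul_le_mul_of_nonneg_left ?_
    (Finset.sum_nonneg fun _ _ => Real.rpow_nonneg (norm_nonneg _) _)
  have happly : ‖ContinuousLinearMap.apply 𝕜 𝕜 (1 : 𝕜)‖ ≤ 1 := by
    refine ContinuousLinearMap.opNorm_le_bound _ zero_le_one fun f => ?_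
    simpa [mul_comm] using f.le_opNorm (1 : 𝕜)
  set φ : ContinuousMultilinearMap 𝕜 E 𝕜 :=
    (ContinuousLinearMap.apply 𝕜 𝕜 (1 : 𝕜)).compContinuousMultilinearMap ψ.1 with hφ
  have hφ1 : ‖φ‖ ≤ 1 := by
    calc ‖φ‖ ≤ ‖ContinuousLinearMap.apply 𝕜 𝕜 (1 : 𝕜)‖ * ‖ψ.1‖ :=
          ContinuousLinearMap.norm_compContinuousMultilinearMap_le _ _
      _ ≤ 1 * 1 := mul_le_mul happly ψ.2 (norm_nonneg ψ.1) zero_le_one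
      _ = 1 := one_mul 1
  have := le_ciSup (aux_bdd_phi p hp m x) (⟨φ, hφ1⟩ :
    {φ : ContinuousMultilinearMap 𝕜 E 𝕜 // ‖φ‖ ≤ 1})
  simpa [hφ] using this

lemma aux_le_sup_psi (p : ℝ) (hp : 0 ≤ p) (m : ℕ) (x : Π l, Fin m → E l) (y : Fin m → 𝕜) :
    (∑ k : Fin m, ‖y k‖ ^ p) *
        (⨆ φ : {φ : ContinuousMultilinearMap 𝕜 E 𝕜 // ‖φ‖ ≤ 1},
          ∑ j : Fin n → Fin m, ‖φ.1 (fun l => x l (j l))‖ ^ p)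
      ≤ ⨆ ψ : {ψ : ContinuousMultilinearMap 𝕜 E (𝕜 →L[𝕜] 𝕜) // ‖ψ‖ ≤ 1},
          ∑ j : Fin n → Fin m, ∑ k : Fin m, ‖ψ.1 (fun l => x l (j l)) (y k)‖ ^ p := by
  have hS : 0 ≤ ∑ k : Fin m, ‖y k‖ ^ p :=
    Finset.sum_nonneg fun _ _ => Real.rpow_nonneg (norm_nonneg _) _
  rw [Real.mul_iSup_of_nonneg hS]
  refine ciSup_le fun φ => ?_
  set ψ : ContinuousMultilinearMap 𝕜 E (𝕜 →L[𝕜] 𝕜) :=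
    (ContinuousLinearMap.mul 𝕜 𝕜).compContinuousMultilinearMap φ.1 with hψ
  have hψ1 : ‖ψ‖ ≤ 1 := by
    calc ‖ψ‖ ≤ ‖ContinuousLinearMap.mul 𝕜 𝕜‖ * ‖φ.1‖ :=
          ContinuousLinearMap.norm_compContinuousMultilinearMap_le _ _
      _ ≤ 1 * 1 := mul_le_mul (ContinuousLinearMap.opNorm_mul_le 𝕜 𝕜) φ.2 (norm_nonneg φ.1) zero_le_one
      _ = 1 := one_mul 1
  have hval : (∑ k : Fin m, ‖y k‖ ^ p) * ∑ j : Fin n → Fin m, ‖φ.1 (fun l => x l (j l))‖ ^ p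
      = ∑ j : Fin n → Fin m, ∑ k : Fin m, ‖ψ (fun l => x l (j l)) (y k)‖ ^ p := by
    rw [aux_sum_eq p ψ m x y]
    congr 1
    refine Finset.sum_congr rfl fun j _ => ?_
    simp [hψ]
  rw [hval]
  exact le_ciSup (aux_bdd_psi p hp m x y) (⟨ψ, hψ1⟩ :
    {ψ : ContinuousMultilinearMap 𝕜 E (𝕜 →L[𝕜] 𝕜) // ‖ψ‖ ≤ 1})


lemma aux_Aone_apply (A : ContinuousMultilinearMap 𝕜 E (𝕜 →L[𝕜] F)) (v : Π l, E l) :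
    Aone A v = A v (1 : 𝕜) := rfl

lemma aux_key (hn : 1 ≤ n) (p : ℝ) (hp : 1 ≤ p) (C : ℝ) (hC : 0 ≤ C)
    (A : ContinuousMultilinearMap 𝕜 E (𝕜 →L[𝕜] F)) :
    StronglyMultipleSumming' p C A ↔ StronglyMultipleSumming p C (Aone A) := by
  have hp0 : (0:ℝ) < p := lt_of_lt_of_le one_pos hp
  have hip : (0:ℝ) ≤ 1/p := by positivity
  constructor
  · intro h m x
    rcases Nat.eq_zero_or_pos m with hm | hm
    · subst hm
      haveI : Nonempty (Fin n) := Fin.pos_iff_nonempty.mp hn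
      haveI : IsEmpty (Fin n → Fin 0) := ⟨fun f => (f (Classical.arbitrary (Fin n))).elim0⟩
      rw [Finset.univ_eq_empty, Finset.sum_empty, Real.zero_rpow (by positivity)]
      refine mul_nonneg hC (Real.rpow_nonneg ?_ _)
      exact Real.iSup_nonneg fun _ =>
        Finset.sum_nonneg fun _ _ => Real.rpow_nonneg (norm_nonneg _) _
    · haveI : NeZero m := ⟨hm.ne'⟩
      set y : Fin m → 𝕜 := fun k => if k = 0 then 1 else 0 with hy
      have hS : ∑ k : Fin m, ‖y k‖ ^ p = 1 := by
        rw [Finset.sum_eq_single (0 : Fin m)]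
        · simp [hy]
        · intro k _ hk
          simp [hy, hk, Real.zero_rpow hp0.ne']
        · simp
      have h1 := h m x y
      rw [aux_sum_eq p A m x y, hS, one_mul] at h1
      have h2 : (⨆ ψ : {ψ : ContinuousMultilinearMap 𝕜 E (𝕜 →L[𝕜] 𝕜) // ‖ψ‖ ≤ 1},
          ∑ j : Fin n → Fin m, ∑ k : Fin m, ‖ψ.1 (fun l => x l (j l)) (y k)‖ ^ p)
          ≤ ⨆ φ : {φ : ContinuousMultilinearMap 𝕜 E 𝕜 // ‖φ‖ ≤ 1},
            ∑ j : Fin n → Fin m, ‖φ.1 (fun l => x l (j l))‖ ^ p := by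
        have := aux_sup_psi_le p hp0.le m x y
        rwa [hS, one_mul] at this
      calc (∑ j : Fin n → Fin m, ‖Aone A (fun l => x l (j l))‖ ^ p) ^ (1/p)
          ≤ C * (⨆ ψ : {ψ : ContinuousMultilinearMap 𝕜 E (𝕜 →L[𝕜] 𝕜) // ‖ψ‖ ≤ 1},
              ∑ j : Fin n → Fin m, ∑ k : Fin m, ‖ψ.1 (fun l => x l (j l)) (y k)‖ ^ p) ^ (1/p) := by
            simpa only [aux_Aone_apply] using h1
        _ ≤ _ := by
            refine mul_le_mul_of_nonneg_left (Real.rpow_le_rpow ?_ h2 hip) hC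
            exact Real.iSup_nonneg fun _ =>
              Finset.sum_nonneg fun _ _ => Finset.sum_nonneg fun _ _ =>
                Real.rpow_nonneg (norm_nonneg _) _
  · intro h m x y
    have hS : 0 ≤ ∑ k : Fin m, ‖y k‖ ^ p :=
      Finset.sum_nonneg fun _ _ => Real.rpow_nonneg (norm_nonneg _) _
    have hT : 0 ≤ ∑ j : Fin n → Fin m, ‖Aone A (fun l => x l (j l))‖ ^ p :=
      Finset.sum_nonneg fun _ _ => Real.rpow_nonneg (norm_nonneg _) _
    have hSφ : 0 ≤ ⨆ φ : {φ : ContinuousMultilinearMap 𝕜 E 𝕜 // ‖φ‖ ≤ 1},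
        ∑ j : Fin n → Fin m, ‖φ.1 (fun l => x l (j l))‖ ^ p :=
      Real.iSup_nonneg fun _ =>
        Finset.sum_nonneg fun _ _ => Real.rpow_nonneg (norm_nonneg _) _
    have hsum : ∑ j : Fin n → Fin m, ∑ k : Fin m, ‖A (fun l => x l (j l)) (y k)‖ ^ p
        = (∑ k : Fin m, ‖y k‖ ^ p) * ∑ j : Fin n → Fin m, ‖Aone A (fun l => x l (j l))‖ ^ p := by
      rw [aux_sum_eq p A m x y]; simp only [aux_Aone_apply]
    calc (∑ j : Fin n → Fin m, ∑ k : Fin m, ‖A (fun l => x l (j l)) (y k)‖ ^ p) ^ (1/p)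
        = (∑ k : Fin m, ‖y k‖ ^ p) ^ (1/p) *
          (∑ j : Fin n → Fin m, ‖Aone A (fun l => x l (j l))‖ ^ p) ^ (1/p) := by
          rw [hsum, Real.mul_rpow hS hT]
      _ ≤ (∑ k : Fin m, ‖y k‖ ^ p) ^ (1/p) *
          (C * (⨆ φ : {φ : ContinuousMultilinearMap 𝕜 E 𝕜 // ‖φ‖ ≤ 1},
            ∑ j : Fin n → Fin m, ‖φ.1 (fun l => x l (j l))‖ ^ p) ^ (1/p)) :=
          mul_le_mul_of_nonneg_left (h m x) (Real.rpow_nonneg hS _)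
      _ = C * ((∑ k : Fin m, ‖y k‖ ^ p) *
            ⨆ φ : {φ : ContinuousMultilinearMap 𝕜 E 𝕜 // ‖φ‖ ≤ 1},
              ∑ j : Fin n → Fin m, ‖φ.1 (fun l => x l (j l))‖ ^ p) ^ (1/p) := by
          rw [Real.mul_rpow hS hSφ]; ring
      _ ≤ _ := by
          refine mul_le_mul_of_nonneg_left
            (Real.rpow_le_rpow (mul_nonneg hS hSφ) (aux_le_sup_psi p hp0.le m x y) hip) hC

end Aux

/-- The ideal `L_{sm,p}` has property [B]: a continuous `(n+1)`-linear map
`A : E₁ × ⋯ × Eₙ × 𝕜 → F` is strongly multiple `p`-summing iff `A1` is, and in that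
case `‖A‖_{sm,p} = ‖A1‖_{sm,p}`. -/
theorem stronglyMultipleSumming_propertyB {𝕜 : Type*} [RCLike 𝕜] {n : ℕ} (hn : 1 ≤ n)
    (E : Fin n → Type*) [∀ i, NormedAddCommGroup (E i)] [∀ i, NormedSpace 𝕜 (E i)]
    [∀ i, CompleteSpace (E i)]
    (F : Type*) [NormedAddCommGroup F] [NormedSpace 𝕜 F] [CompleteSpace F]
    (p : ℝ) (hp : 1 ≤ p) (A : ContinuousMultilinearMap 𝕜 E (𝕜 →L[𝕜] F)) :
    ((∃ C, 0 ≤ C ∧ StronglyMultipleSumming' p C A) ↔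
      (∃ C, 0 ≤ C ∧ StronglyMultipleSumming p C (Aone A))) ∧
    ((∃ C, 0 ≤ C ∧ StronglyMultipleSumming' p C A) →
      sInf {C | 0 ≤ C ∧ StronglyMultipleSumming' p C A}
        = sInf {C | 0 ≤ C ∧ StronglyMultipleSumming p C (Aone A)}) := by
  have key : ∀ C : ℝ, (0 ≤ C ∧ StronglyMultipleSumming' p C A) ↔
      (0 ≤ C ∧ StronglyMultipleSumming p C (Aone A)) :=
    fun C => and_congr_right fun hC => aux_key hn p hp C hC A
  refine ⟨exists_congr key, fun _ => ?_⟩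
  congr 1
  ext C
  exact key C
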